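/- Let k ≥ 2, n ≥ 1, and let c_1,...,c_n ∈ {1,...,k} with N_j = N_1 for all j ∈ {1,...,k−1} (incorrect labels occur equally often). Then N_k > N_1 if and only if (1/n)∑_{i=1}^n c_i > (k+1)/2. -/
import Mathlib

lemma gauss_Ioc_aux (m : ℕ) : (∑ j ∈ Finset.Ioc 0 m, j) * 2 = m * (m + 1) := by
  induction m with
  | zero => simp
  | succ p ih =>
    rw [Finset.sum_Ioc_succ_top (by omega), add_mul, ih]
    ring

lemma gauss_Icc_aux (m : ℕ) : (∑ j ∈ Finset.Icc 1 m, j) * 2 = m * (m + 1) := by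
  rw [show Finset.Icc 1 m = Finset.Ioc 0 m from rfl]
  exact gauss_Ioc_aux m

theorem majority_correct_iff_average (k n : ℕ) (hk : 2 ≤ k) (hn : 1 ≤ n)
    (c : ℕ → ℕ) (hrange : ∀ i < n, c i ∈ Finset.Icc 1 k)
    (N : ℕ → ℕ) (hN : ∀ j, N j = ((Finset.range n).filter (fun i => c i = j)).card)
    (huniform : ∀ j, 1 ≤ j → j < k → N j = N 1) :
    N k > N 1 ↔ (∑ i ∈ Finset.range n, (c i : ℝ)) / n > ((k : ℝ) + 1) / 2 := by
  have hmaps : ∀ i ∈ Finset.range n, c i ∈ Finset.Icc 1 k := by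
    intro i hi; exact hrange i (Finset.mem_range.mp hi)
  -- n as sum of fibers
  have hn_eq : n = ∑ j ∈ Finset.Icc 1 k, N j := by
    have := Finset.card_eq_sum_card_fiberwise hmaps
    simpa [hN] using this
  -- sum of c as weighted sum
  have hS : (∑ i ∈ Finset.range n, c i) = ∑ j ∈ Finset.Icc 1 k, j * N j := by
    rw [← Finset.sum_fiberwise_of_maps_to hmaps (fun i => c i)]
    refine Finset.sum_congr rfl fun j hj => ?_
    rw [hN]
    rw [Finset.sum_congr rfl (fun i hi => (Finset.mem_filter.mp hi).2)]
    simp [mul_comm]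
  obtain ⟨m, rfl⟩ : ∃ m, k = m + 1 := ⟨k - 1, (Nat.succ_pred_eq_of_pos (by omega)).symm⟩
  have hm : 1 ≤ m := by omega
  have hsplit : ∀ f : ℕ → ℕ, ∑ j ∈ Finset.Icc 1 (m+1), f j
      = (∑ j ∈ Finset.Icc 1 m, f j) + f (m+1) := by
    intro f; exact Finset.sum_Icc_succ_top (by omega) f
  have huni : ∀ j ∈ Finset.Icc 1 m, N j = N 1 := by
    intro j hj
    have := Finset.mem_Icc.mp hj
    exact huniform j this.1 (by omega)
  have hn2 : n = m * N 1 + N (m+1) := by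
    rw [hn_eq, hsplit, Finset.sum_congr rfl huni, Finset.sum_const, Nat.card_Icc]
    simp [smul_eq_mul]
  have hS2 : (∑ i ∈ Finset.range n, c i) * 2 = m * (m + 1) * N 1 + 2 * (m + 1) * N (m+1) := by
    rw [hS, hsplit, Finset.sum_congr rfl (fun j hj => by rw [huni j hj]),
      ← Finset.sum_mul, add_mul, mul_assoc, mul_comm (N 1) 2, ← mul_assoc, gauss_Icc_aux]
    ring
  -- now real arithmetic
  have hnR : (0:ℝ) < n := by exact_mod_cast hn
  refine Iff.trans ?_ (div_lt_div_iff₀ (by norm_num : (0:ℝ) < 2) hnR).symm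
  have e1 : (∑ i ∈ Finset.range n, (c i : ℝ)) * 2
      = m * (m + 1) * N 1 + 2 * (m + 1) * N (m+1) := by
    have := congrArg (fun t : ℕ => (t : ℝ)) hS2
    push_cast at this ⊢
    linarith [this]
  have e2 : (n : ℝ) = m * N 1 + N (m+1) := by exact_mod_cast hn2
  have hmR : (1:ℝ) ≤ m := by exact_mod_cast hm
  constructor
  · intro h
    have h' : (N 1 : ℝ) < N (m+1) := by exact_mod_cast h
    push_cast
    nlinarith [e1, e2, hmR, h']
  · intro h
    push_cast at h
    have h' : (N 1 : ℝ) < N (m+1) := by nlinarith [e1, e2, hmR, h]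
    exact_mod_cast h'
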